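/- Let T be a spanning tree of a connected graph on n vertices, and label the vertices n, n-1, ..., 1 in the reverse order in which they are first visited by a depth-first search traversal of T starting from the root. Let d(i) denote the distance in T between the vertices labelled i and i+1. Then the sum of d(i) for i = 1 to n-1 is at most 2(n-1). -/

import Mathlib

/-- Sum of distances between consecutive entries of a list. -/
noncomputable def pairSum {V : Type*} (G : SimpleGraph V) : List V → ℕ
  | [] => 0
  | a :: l => G.dist a (l.headD a) + pairSum G l

@[simp] lemma pairSum_nil {V : Type*} (G : SimpleGraph V) : pairSum G [] = 0 := by
  simp [pairSum]

@[simp] lemma pairSum_cons {V : Type*} (G : SimpleGraph V) (a : V) (l : List V) :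
    pairSum G (a :: l) = G.dist a (l.headD a) + pairSum G l := by
  simp [pairSum]

lemma pairSum_cons_le {V : Type*} {G : SimpleGraph V} (hc : G.Connected)
    {w x : V} (hwx : G.dist w x ≤ 1) (L : List V) :
    pairSum G (w :: L) ≤ 1 + pairSum G (x :: L) := by
  cases L with
  | nil => simp [SimpleGraph.dist_self]
  | cons a L' =>
    simp only [pairSum_cons, List.headD_cons]
    have htri : G.dist w a ≤ G.dist w x + G.dist x a := hc.dist_triangle
    omega

lemma pairSum_le_length {V : Type*} {G : SimpleGraph V} (hc : G.Connected) :
    ∀ {w v : V} (q : G.Walk w v) (L : List V), L.Sublist q.support →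
      pairSum G (w :: L) ≤ q.length := by
  intro w v q
  induction q with
  | nil =>
    intro L hL
    simp only [SimpleGraph.Walk.support_nil] at hL
    rcases List.sublist_singleton.mp hL with rfl | rfl <;>
      simp [SimpleGraph.dist_self]
  | @cons w x v h q ih =>
    intro L hL
    have hwx : G.dist w x ≤ 1 := by
      simpa using SimpleGraph.dist_le h.toWalk
    simp only [SimpleGraph.Walk.support_cons] at hL
    rw [SimpleGraph.Walk.length_cons]
    cases hL with
    | cons _ hL' =>
      have := pairSum_cons_le hc hwx L
      have := ih L hL'
      omega
    | cons_cons =>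
      rename_i L' hL'
      have h1 : pairSum G (w :: w :: L') = pairSum G (w :: L') := by
        cases L' <;> simp [SimpleGraph.dist_self]
      have := pairSum_cons_le hc hwx L'
      have := ih L' hL'
      omega

lemma pairSum_ofFn {V : Type*} (G : SimpleGraph V) :
    ∀ (d : ℕ) (g : Fin (d + 1) → V),
      pairSum G (List.ofFn g) = ∑ i : Fin d, G.dist (g i.castSucc) (g i.succ) := by
  intro d
  induction d with
  | zero => intro g; simp [List.ofFn_succ, SimpleGraph.dist_self]
  | succ n ih =>
    intro g
    rw [List.ofFn_succ (f := g), pairSum_cons, ih (fun i => g i.succ), Fin.sum_univ_succ]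
    rw [List.ofFn_succ (f := fun i => g i.succ)]
    simp only [List.headD_cons]
    congr 1

lemma ofFn_reverse {V : Type*} {n : ℕ} (f : Fin n → V) :
    (List.ofFn f).reverse = List.ofFn (fun i => f i.rev) := by
  apply List.ext_getElem
  · simp
  · intro i h1 h2
    simp only [List.getElem_reverse, List.getElem_ofFn, List.length_reverse,
      List.length_ofFn] at *
    congr 1
    ext
    simp [Fin.val_rev]
    omega

/-- Let `T` be a tree on `d + 1` vertices, and label the vertices `d+1, d, …, 1` in the
reverse order in which they are first visited by a depth-first-search traversal of `T`
(modelled as a closed walk `p` from the root which visits every vertex and traverses each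
edge at most twice; the first-visit order is recorded by `p.support.dedup`).  If `f k` is
the vertex labelled `k + 1`, then `∑_{i=1}^{d} dist(label i, label i+1) ≤ 2·d`. -/
theorem stmt4 {V : Type*} [Fintype V] [DecidableEq V] (G : SimpleGraph V)
    (hG : G.IsTree) (d : ℕ) (hcard : Fintype.card V = d + 1)
    (f : Fin (d + 1) → V) (r : V) (p : G.Walk r r)
    (hedges : ∀ e : Sym2 V, p.edges.count e ≤ 2)
    (horder : p.support.dedup = (List.ofFn f).reverse) :
    ∑ i : Fin d, G.dist (f i.castSucc) (f i.succ) ≤ 2 * d := by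
  classical
  have hc : G.Connected := hG.isConnected
  -- walk length is at most 2 * d
  have hlen : p.length ≤ 2 * d := by
    have h1 : p.edges.length = ∑ e ∈ p.edges.toFinset, p.edges.count e := by
      simpa using (Multiset.toFinset_sum_count_eq (p.edges : Multiset (Sym2 V))).symm
    have h2 : p.edges.toFinset ⊆ G.edgeFinset := by
      intro e he
      rw [List.mem_toFinset] at he
      exact SimpleGraph.mem_edgeFinset.mpr (p.edges_subset_edgeSet he)
    have h3 : G.edgeFinset.card = d := by
      have := hG.card_edgeFinset
      omega
    calc p.length = p.edges.length := (p.length_edges).symm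
      _ = ∑ e ∈ p.edges.toFinset, p.edges.count e := h1
      _ ≤ ∑ _e ∈ p.edges.toFinset, 2 := Finset.sum_le_sum fun e _ => hedges e
      _ = 2 * p.edges.toFinset.card := by rw [Finset.sum_const]; ring
      _ ≤ 2 * G.edgeFinset.card := Nat.mul_le_mul_left 2 (Finset.card_le_card h2)
      _ = 2 * d := by rw [h3]
  -- pairSum of the dedup list bounds the sum
  have hps : pairSum G p.support.dedup ≤ p.length := by
    have h := pairSum_le_length hc p p.support.dedup (List.dedup_sublist _)
    have : pairSum G p.support.dedup ≤ pairSum G (r :: p.support.dedup) := by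
      simp only [pairSum_cons]; omega
    omega
  have hsum : pairSum G ((List.ofFn f).reverse)
      = ∑ i : Fin d, G.dist (f i.castSucc.rev) (f i.succ.rev) := by
    rw [ofFn_reverse, pairSum_ofFn]
  have hre : ∑ i : Fin d, G.dist (f i.castSucc.rev) (f i.succ.rev)
      = ∑ i : Fin d, G.dist (f i.castSucc) (f i.succ) := by
    refine Fintype.sum_equiv Fin.revPerm _ _ ?_
    intro i
    rw [Fin.rev_castSucc, Fin.rev_succ, SimpleGraph.dist_comm]
    rfl
  rw [← hre, ← hsum, ← horder]
  exact le_trans hps hlen
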